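/- For a path connected space Z and points p, q ∈ Z, the topological fundamental groups π₁(Z,p) and π₁(Z,q) are isomorphic as topological groups (the change-of-basepoint isomorphism induced by a path from p to q is a homeomorphism). -/

import Mathlib

open unitInterval Topology

noncomputable section

/-- The topological fundamental group: path components of the based loop space
(compact-open topology), with the quotient topology. -/
def piTop (Z : Type*) [TopologicalSpace Z] (z : Z) : Type _ :=
  Quotient (pathSetoid (Path z z))

instance (Z : Type*) [TopologicalSpace Z] (z : Z) : TopologicalSpace (piTop Z z) :=
  instTopologicalSpaceQuotient

/-- The class of a loop in the topological fundamental group. -/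
def piMk {Z : Type*} [TopologicalSpace Z] {z : Z} (γ : Path z z) : piTop Z z :=
  Quotient.mk _ γ

section Helpers

variable {X : Type*} [TopologicalSpace X] {x y z w : X}

/-- Homotopic paths are joined in the path space. -/
lemma Path.Homotopic.joined {a b : Path x y} (h : a.Homotopic b) : Joined a b := by
  obtain ⟨H⟩ := h
  refine ⟨⟨⟨fun t => H.eval t, Path.continuous_uncurry_iff.mp ?_⟩, H.eval_zero, H.eval_one⟩⟩
  exact H.continuous

lemma homotopic_assoc (a : Path x y) (b : Path y z) (c : Path z w) :
    ((a.trans b).trans c).Homotopic (a.trans (b.trans c)) :=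
  ⟨Path.Homotopy.transAssoc a b c⟩

lemma homotopic_trans_symm (a : Path x y) : (a.trans a.symm).Homotopic (Path.refl x) :=
  ⟨(Path.Homotopy.reflTransSymm a).symm⟩

lemma homotopic_refl_trans (a : Path x y) : ((Path.refl x).trans a).Homotopic a :=
  ⟨Path.Homotopy.reflTrans a⟩

lemma homotopic_trans_refl (a : Path x y) : (a.trans (Path.refl y)).Homotopic a :=
  ⟨Path.Homotopy.transRefl a⟩

/-- `γ · (γ⁻¹ · f) ≃ f`. -/
lemma homotopic_cancel_left (γ : Path x y) (f : Path x z) :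
    (γ.trans (γ.symm.trans f)).Homotopic f :=
  ((homotopic_assoc γ γ.symm f).symm.trans
    ((homotopic_trans_symm γ).hcomp (Path.Homotopic.refl f))).trans (homotopic_refl_trans f)

/-- `(γ · ((γ⁻¹ · f) · γ)) · γ⁻¹ ≃ f`. -/
lemma homotopic_conj_conj (γ : Path x y) (f : Path x x) :
    ((γ.trans ((γ.symm.trans f).trans γ)).trans γ.symm).Homotopic f := by
  have h1 : (γ.trans ((γ.symm.trans f).trans γ)).Homotopic (f.trans γ) :=
    ((homotopic_assoc γ (γ.symm.trans f) γ).symm).trans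
      ((homotopic_cancel_left γ f).hcomp (Path.Homotopic.refl γ))
  exact (h1.hcomp (Path.Homotopic.refl γ.symm)).trans
    (((homotopic_assoc f γ γ.symm).trans
      ((Path.Homotopic.refl f).hcomp (homotopic_trans_symm γ))).trans (homotopic_trans_refl f))

/-- conjugation is multiplicative up to homotopy. -/
lemma homotopic_conj_mul (γ : Path x y) (f g : Path x x) :
    ((γ.symm.trans (f.trans g)).trans γ).Homotopic
      (((γ.symm.trans f).trans γ).trans ((γ.symm.trans g).trans γ)) := by
  have h1 : (γ.trans ((γ.symm.trans g).trans γ)).Homotopic (g.trans γ) :=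
    ((homotopic_assoc γ (γ.symm.trans g) γ).symm).trans
      ((homotopic_cancel_left γ g).hcomp (Path.Homotopic.refl γ))
  have h2 : (((γ.symm.trans f).trans γ).trans ((γ.symm.trans g).trans γ)).Homotopic
      ((γ.symm.trans f).trans (g.trans γ)) :=
    (homotopic_assoc (γ.symm.trans f) γ ((γ.symm.trans g).trans γ)).trans
      ((Path.Homotopic.refl (γ.symm.trans f)).hcomp h1)
  have h3 : ((γ.symm.trans f).trans (g.trans γ)).Homotopic
      ((γ.symm.trans (f.trans g)).trans γ) :=
    ((homotopic_assoc (γ.symm.trans f) g γ).symm).trans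
      (((homotopic_assoc γ.symm f g).hcomp (Path.Homotopic.refl γ)))
  exact (h2.trans h3).symm

end Helpers

section Conj

variable {Z : Type*} [TopologicalSpace Z] {p q : Z}

/-- The continuous conjugation map on loop spaces. -/
def conjMap (γ : Path p q) : Path p p → Path q q :=
  fun f => (γ.symm.trans f).trans γ

lemma conjMap_continuous (γ : Path p q) : Continuous (conjMap γ) := by
  have h1 : Continuous fun f : Path p p => γ.symm.trans f :=
    Path.continuous_trans.comp (continuous_const.prodMk continuous_id)
  exact Path.continuous_trans.comp (h1.prodMk continuous_const)

/-- `conjMap` descends to the quotient. -/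
def conjQ (γ : Path p q) : piTop Z p → piTop Z q :=
  Quotient.map (conjMap γ) (fun _ _ h => ⟨h.somePath.map (conjMap_continuous γ)⟩)

lemma conjQ_mk (γ : Path p q) (f : Path p p) : conjQ γ (piMk f) = piMk (conjMap γ f) := rfl

lemma conjQ_continuous (γ : Path p q) : Continuous (conjQ γ) :=
  continuous_quot_lift _ (continuous_quotient_mk'.comp (conjMap_continuous γ))

lemma conjQ_conjQ (γ : Path p q) (a : piTop Z p) : conjQ γ.symm (conjQ γ a) = a := by
  refine Quotient.inductionOn a fun f => ?_
  refine Quotient.sound ?_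
  show Joined (conjMap γ.symm (conjMap γ f)) f
  refine Path.Homotopic.joined ?_
  have := homotopic_conj_conj γ f
  simpa [conjMap, Path.symm_symm] using this

end Conj

/-- for a path connected space `Z` the topological fundamental
groups at any two basepoints are isomorphic as topological groups: the
change-of-basepoint map `[f] ↦ [γ⁻¹ · f · γ]` is a homeomorphism preserving
concatenation. -/
theorem change_of_basepoint_homeomorphism
    (Z : Type*) [TopologicalSpace Z] [PathConnectedSpace Z] (p q : Z) :
    ∃ (φ : piTop Z p ≃ₜ piTop Z q) (γ : Path p q),
      (∀ f : Path p p, φ (piMk f) = piMk ((γ.symm.trans f).trans γ)) ∧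
      (∀ f g : Path p p,
        φ (piMk (f.trans g)) =
          piMk (((γ.symm.trans f).trans γ).trans ((γ.symm.trans g).trans γ))) := by
  obtain ⟨γ⟩ := PathConnectedSpace.joined p q
  have hinv : ∀ a : piTop Z q, conjQ γ (conjQ γ.symm a) = a := by
    intro a
    have := conjQ_conjQ γ.symm a
    rwa [Path.symm_symm] at this
  refine ⟨⟨⟨conjQ γ, conjQ γ.symm, conjQ_conjQ γ, hinv⟩,
    conjQ_continuous γ, conjQ_continuous γ.symm⟩, γ, fun f => rfl, fun f g => ?_⟩
  show conjQ γ (piMk (f.trans g)) = _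
  rw [conjQ_mk]
  exact Quotient.sound (Path.Homotopic.joined (homotopic_conj_mul γ f g))
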